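/- Let A ∈ ℝ^{m×n}, p ∈ [2, ∞), ε > 0, δ ≥ 0, and suppose the additive noise mechanism M(x) = Ax + z is (ε,δ)-differentially private, where the noise z has finite second moments and satisfies ‖E[z]‖₂ ≤ (γ_{(p)}(A)/ε) · n^{(p−2)/(2p)}. Suppose further that δ' := 2δ/(1 − e^{−ε}) ≤ min{ 1/16, ε·κ(A)·n^{(p−2)/(2p)}/(12 γ_{(p)}(A)), 1 − e^{−ε} }. Fix θ ∈ ℝ^m and let M_θ(x) := θᵀAx + θᵀz. Then for every x ∈ ℝ^n there exists x' with ‖x − x'‖₁ ≤ 1 such that, writing P and Q for the distributions on ℝ of M_θ(x) and M_θ(x') respectively, S := S_{P,Q,2ε}, and P̂ for the measure P̂(T) := (Q(S)/P(S))·P(T ∩ S) + Q(T \ S), one has |E_{X∼P̂}[X] − E_{X∼Q}[X]| ≥ (1/2 − 2δ') · w_{AB₁^n}(θ)/2 − (17/8) · √(δ' · Var[θᵀM(x)]). -/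

import Mathlib

open MeasureTheory Matrix
open scoped ENNReal

noncomputable section

namespace DPPaper

variable {ι κ : Type*}

/-- Two inputs `x, x' : ι → ℝ` are neighboring if `‖x - x'‖₁ ≤ 1`. -/
def Neighboring [Fintype ι] (x x' : ι → ℝ) : Prop :=
  ∑ i, |x i - x' i| ≤ 1

/-- A mechanism `M` (a map from inputs to probability measures on an output space `Ω`)
is `(ε,δ)`-differentially private if for all neighboring inputs and all measurable sets `S`,
`M x S ≤ e^ε · M x' S + δ`. -/
def IsDP [Fintype ι] {Ω : Type*} [MeasurableSpace Ω]
    (M : (ι → ℝ) → Measure Ω) (ε δ : ℝ) : Prop :=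
  ∀ x x' : ι → ℝ, Neighboring x x' → ∀ S : Set Ω, MeasurableSet S →
    M x S ≤ ENNReal.ofReal (Real.exp ε) * M x' S + ENNReal.ofReal δ

/-- The `ℓ_p^p`-error of a mechanism `M` on the query matrix `A`:
`sup_x (E_{Y ~ M x} [ ‖Y - A x‖_p^p ])^{1/p}`, valued in `ℝ≥0∞`. -/
def errLp [Fintype ι] [Fintype κ] (M : (ι → ℝ) → Measure (κ → ℝ))
    (A : Matrix κ ι ℝ) (p : ℝ) : ℝ≥0∞ :=
  ⨆ x : ι → ℝ,
    (∫⁻ y, ENNReal.ofReal (∑ i, |y i - A.mulVec x i| ^ p) ∂(M x)) ^ (1 / p)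

/-- The `q`-trace of a square matrix: `(∑ i, U i i ^ q)^{1/q}`. -/
def trq [Fintype κ] (q : ℝ) (U : Matrix κ κ ℝ) : ℝ :=
  (∑ i, (U i i) ^ q) ^ (1 / q)

/-- The `1 → 2` operator norm of a matrix: the largest `ℓ₂`-norm of a column. -/
def norm12 [Fintype ι] [Fintype κ] (R : Matrix κ ι ℝ) : ℝ :=
  ⨆ j : ι, Real.sqrt (∑ i, (R i j) ^ 2)

/-- The factorization norm `γ_{(p)}(A)`. -/
def gammaP [Fintype ι] [Fintype κ] (p : ℝ) (A : Matrix κ ι ℝ) : ℝ :=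
  sInf { c : ℝ | ∃ (k : ℕ) (L : Matrix κ (Fin k) ℝ) (R : Matrix (Fin k) ι ℝ),
    L * R = A ∧ c = Real.sqrt (trq (p / 2) (L * Lᵀ)) * norm12 R }

/-- The Schatten-1 norm of a matrix: the trace of the PSD square root of `Aᵀ * A`,
i.e. the sum of the singular values of `A`. -/
def psdSqrt {n : Type*} [Fintype n] [DecidableEq n] {M : Matrix n n ℝ} (hM : M.PosSemidef) :
    Matrix n n ℝ :=
  hM.1.eigenvectorUnitary.1 * diagonal ((↑) ∘ Real.sqrt ∘ hM.1.eigenvalues) *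
    (star hM.1.eigenvectorUnitary : Matrix n n ℝ)

def schatten1 [Fintype ι] [Fintype κ] [DecidableEq ι] (A : Matrix κ ι ℝ) : ℝ :=
  (psdSqrt (Matrix.posSemidef_conjTranspose_mul_self A)).trace

/-- The sensitivity polytope `A B₁^n = {A x : ‖x‖₁ ≤ 1}`. -/
def sensPolytope [Fintype ι] (A : Matrix κ ι ℝ) : Set (κ → ℝ) :=
  {v | ∃ x : ι → ℝ, (∑ i, |x i|) ≤ 1 ∧ v = A.mulVec x}

/-- The width of a set `K` in direction `θ`. -/
def width [Fintype κ] (K : Set (κ → ℝ)) (θ : κ → ℝ) : ℝ :=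
  sSup ((fun v => ∑ i, θ i * v i) '' K) - sInf ((fun v => ∑ i, θ i * v i) '' K)

/-- `κ(A)`: the minimal width of the sensitivity polytope over all unit directions. -/
def kappa [Fintype ι] [Fintype κ] (A : Matrix κ ι ℝ) : ℝ :=
  sInf { c : ℝ | ∃ θ : κ → ℝ, (∑ i, (θ i) ^ 2) = 1 ∧ c = width (sensPolytope A) θ }

/-- The prefix-sum (continual counting) matrix: lower-triangular all ones. -/
def Aprefix (n : ℕ) : Matrix (Fin n) (Fin n) ℝ :=
  fun i j => if j ≤ i then 1 else 0

/-- The covariance matrix of a measure on `κ → ℝ`. -/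
def covMatrix [Fintype κ] (μ : Measure (κ → ℝ)) : Matrix κ κ ℝ :=
  fun i j => ∫ y, (y i - ∫ y', y' i ∂μ) * (y j - ∫ y', y' j ∂μ) ∂μ

/-- The parity query matrix `Q_{d,w}`: rows indexed by `w`-element subsets `P` of `{1,…,d}`,
columns indexed by points of `{-1,1}^d` (encoded as `Fin d → Bool`), entry `∏_{i ∈ P} x_i`. -/
def parityMatrix (d w : ℕ) : Matrix {P : Finset (Fin d) // P.card = w} (Fin d → Bool) ℝ :=
  fun P b => ∏ i ∈ P.1, (if b i then (1 : ℝ) else -1)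

/-- The Hadamard matrices: `H_0 = [1]`, `H_{d+1} = [[H_d, H_d], [H_d, -H_d]]`. -/
def Hadamard : (d : ℕ) → Matrix (Fin (2 ^ d)) (Fin (2 ^ d)) ℝ
  | 0 => fun _ _ => 1
  | (d + 1) =>
    Matrix.reindex
      (finSumFinEquiv.trans (finCongr (by rw [pow_succ, mul_two])))
      (finSumFinEquiv.trans (finCongr (by rw [pow_succ, mul_two])))
      (Matrix.fromBlocks (Hadamard d) (Hadamard d) (Hadamard d) (-(Hadamard d)))

end DPPaper

namespace DPAux

/-- Cauchy–Schwarz for set integrals. -/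
lemma sq_setIntegral_le {μ : Measure ℝ} [IsFiniteMeasure μ] {f : ℝ → ℝ}
    (hf : Integrable f μ) (hf2 : Integrable (fun x => f x ^ 2) μ)
    (U : Set ℝ) :
    (∫ x in U, f x ∂μ) ^ 2 ≤ (μ U).toReal * ∫ x, f x ^ 2 ∂μ := by
  set C := ∫ x in U, f x ^ 2 ∂μ with hC
  set I := ∫ x in U, f x ∂μ with hI
  set mU := (μ U).toReal with hmU
  have hfr : Integrable f (μ.restrict U) := hf.restrict
  have hf2r : Integrable (fun x => f x ^ 2) (μ.restrict U) := hf2.restrict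
  have expand : ∀ t : ℝ, ∫ x in U, (f x - t) ^ 2 ∂μ = mU * t ^ 2 + (-2 * I) * t + C := by
    intro t
    have h1 : ∀ x : ℝ, (f x - t) ^ 2 = f x ^ 2 - (2 * t) * f x + t ^ 2 := by intro x; ring
    simp_rw [h1]
    have hint1 : Integrable (fun x => f x ^ 2 - 2 * t * f x) (μ.restrict U) :=
      hf2r.sub (hfr.const_mul _)
    rw [integral_add hint1 (integrable_const _),
      integral_sub hf2r (hfr.const_mul _), integral_const_mul, setIntegral_const]
    simp only [smul_eq_mul, measureReal_def]
    ring
  have quad : ∀ t : ℝ, 0 ≤ mU * (t * t) + (-2 * I) * t + C := by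
    intro t
    have := integral_nonneg (μ := μ.restrict U) (f := fun x => (f x - t) ^ 2)
      fun x => sq_nonneg _
    rw [expand t] at this
    nlinarith [this]
  have hdisc := discrim_le_zero quad
  rw [discrim] at hdisc
  have hCle : C ≤ ∫ x, f x ^ 2 ∂μ :=
    setIntegral_le_integral hf2 (Filter.Eventually.of_forall fun x => sq_nonneg _)
  have hmU0 : 0 ≤ mU := ENNReal.toReal_nonneg
  have hmul := mul_le_mul_of_nonneg_left hCle hmU0
  linarith only [hdisc, hmul]


lemma toReal_dp {P Q : Measure ℝ} [IsProbabilityMeasure Q] {U : Set ℝ} {ε δ : ℝ}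
    (hδ0 : 0 ≤ δ)
    (h : P U ≤ ENNReal.ofReal (Real.exp ε) * Q U + ENNReal.ofReal δ) :
    (P U).toReal ≤ Real.exp ε * (Q U).toReal + δ := by
  have hfin : ENNReal.ofReal (Real.exp ε) * Q U + ENNReal.ofReal δ ≠ ⊤ := by
    refine ENNReal.add_ne_top.mpr ⟨?_, ENNReal.ofReal_ne_top⟩
    exact ENNReal.mul_ne_top ENNReal.ofReal_ne_top (measure_ne_top Q U)
  have := ENNReal.toReal_mono hfin h
  rwa [ENNReal.toReal_add (ENNReal.mul_ne_top ENNReal.ofReal_ne_top (measure_ne_top Q U))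
      ENNReal.ofReal_ne_top, ENNReal.toReal_mul, ENNReal.toReal_ofReal (Real.exp_nonneg ε),
      ENNReal.toReal_ofReal hδ0] at this

/-- Privacy-loss tail bound: an (ε,δ)-indistinguishable pair puts mass at most
`2δ/(1-e^{-ε})` outside the set where the privacy loss is within `2ε`. -/
lemma tail_bound (P Q : Measure ℝ) [IsProbabilityMeasure P] [IsProbabilityMeasure Q]
    {ε δ : ℝ} (hε : 0 < ε) (hδ0 : 0 ≤ δ)
    (hPQ : ∀ U : Set ℝ, MeasurableSet U →
      P U ≤ ENNReal.ofReal (Real.exp ε) * Q U + ENNReal.ofReal δ)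
    (hQP : ∀ U : Set ℝ, MeasurableSet U →
      Q U ≤ ENNReal.ofReal (Real.exp ε) * P U + ENNReal.ofReal δ) :
    (P {ω | ENNReal.ofReal (Real.exp (-(2 * ε))) ≤ P.rnDeriv Q ω ∧
        P.rnDeriv Q ω ≤ ENNReal.ofReal (Real.exp (2 * ε))}ᶜ).toReal ≤
        2 * δ / (1 - Real.exp (-ε)) ∧
    (Q {ω | ENNReal.ofReal (Real.exp (-(2 * ε))) ≤ P.rnDeriv Q ω ∧
        P.rnDeriv Q ω ≤ ENNReal.ofReal (Real.exp (2 * ε))}ᶜ).toReal ≤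
        2 * δ / (1 - Real.exp (-ε)) := by
  set f := P.rnDeriv Q with hf_def
  have hf : Measurable f := Measure.measurable_rnDeriv P Q
  set S : Set ℝ := {ω | ENNReal.ofReal (Real.exp (-(2 * ε))) ≤ f ω ∧
      f ω ≤ ENNReal.ofReal (Real.exp (2 * ε))} with hS_def
  set Tp : Set ℝ := {ω | ENNReal.ofReal (Real.exp (2 * ε)) < f ω} with hTp_def
  set Tm : Set ℝ := {ω | f ω < ENNReal.ofReal (Real.exp (-(2 * ε)))} with hTm_def
  have hTpm : MeasurableSet Tp := measurableSet_lt measurable_const hf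
  have hTmm : MeasurableSet Tm := measurableSet_lt hf measurable_const
  have hsub : Sᶜ ⊆ Tm ∪ Tp := by
    intro ω hω
    simp only [hS_def, Set.mem_compl_iff, Set.mem_setOf_eq, not_and_or, not_le] at hω
    exact hω
  -- abbreviations for real masses
  set pp := (P Tp).toReal
  set qp := (Q Tp).toReal
  set pm := (P Tm).toReal
  set qm := (Q Tm).toReal
  have hpp0 : 0 ≤ pp := ENNReal.toReal_nonneg
  have hqp0 : 0 ≤ qp := ENNReal.toReal_nonneg
  have hpm0 : 0 ≤ pm := ENNReal.toReal_nonneg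
  have hqm0 : 0 ≤ qm := ENNReal.toReal_nonneg
  set B := Real.exp (-ε) with hB_def
  have hB0 : 0 < B := Real.exp_pos _
  have hB1 : B < 1 := Real.exp_lt_one_iff.mpr (by linarith)
  have hAB : Real.exp ε * B = 1 := by rw [hB_def, ← Real.exp_add]; simp
  have hE2 : Real.exp (2 * ε) = Real.exp ε * Real.exp ε := by
    rw [← Real.exp_add]; ring_nf
  have hE2' : Real.exp (-(2 * ε)) = B * B := by
    rw [hB_def, ← Real.exp_add]; ring_nf
  -- Step A : e^{2ε} * qp ≤ pp
  have hstepA : Real.exp (2 * ε) * qp ≤ pp := by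
    have h1 : ENNReal.ofReal (Real.exp (2 * ε)) * Q Tp ≤ P Tp := by
      calc ENNReal.ofReal (Real.exp (2 * ε)) * Q Tp
          = ∫⁻ ω in Tp, ENNReal.ofReal (Real.exp (2 * ε)) ∂Q := by
            rw [setLIntegral_const]
        _ ≤ ∫⁻ ω in Tp, f ω ∂Q := setLIntegral_mono hf fun ω hω => le_of_lt hω
        _ ≤ P Tp := Measure.setLIntegral_rnDeriv_le Tp
    have := ENNReal.toReal_mono (measure_ne_top P Tp) h1
    rwa [ENNReal.toReal_mul, ENNReal.toReal_ofReal (Real.exp_nonneg _)] at this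
  -- singular set
  have hsing := Measure.mutuallySingular_singularPart P Q
  set E := hsing.nullSet with hE_def
  have hEm : MeasurableSet E := hsing.measurableSet_nullSet
  have hE0 : P.singularPart Q E = 0 := hsing.measure_nullSet
  have hEc : Q Eᶜ = 0 := hsing.measure_compl_nullSet
  -- Step B : P (Tm ∩ E) ≤ e^{-2ε} * Q Tm  (in ℝ≥0∞)
  have hstepB : P (Tm ∩ E) ≤ ENNReal.ofReal (Real.exp (-(2 * ε))) * Q Tm := by
    have hdec : P (Tm ∩ E) = P.singularPart Q (Tm ∩ E)
        + (Q.withDensity f) (Tm ∩ E) := by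
      conv_lhs => rw [← Measure.singularPart_add_rnDeriv P Q]
      rfl
    have h1 : P.singularPart Q (Tm ∩ E) = 0 :=
      measure_mono_null Set.inter_subset_right hE0
    have h2 : (Q.withDensity f) (Tm ∩ E) ≤ ENNReal.ofReal (Real.exp (-(2 * ε))) * Q Tm := by
      rw [withDensity_apply f (hTmm.inter hEm)]
      calc ∫⁻ ω in Tm ∩ E, f ω ∂Q
          ≤ ∫⁻ ω in Tm ∩ E, ENNReal.ofReal (Real.exp (-(2 * ε))) ∂Q :=
            setLIntegral_mono measurable_const fun ω hω => le_of_lt hω.1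
        _ = ENNReal.ofReal (Real.exp (-(2 * ε))) * Q (Tm ∩ E) := setLIntegral_const _ _
        _ ≤ _ := mul_le_mul_right (measure_mono Set.inter_subset_left) _
    rw [hdec, h1, zero_add]
    exact h2
  have hstepB' : (P (Tm ∩ E)).toReal ≤ B * B * qm := by
    have := ENNReal.toReal_mono
      (ENNReal.mul_ne_top ENNReal.ofReal_ne_top (measure_ne_top Q Tm)) hstepB
    rwa [ENNReal.toReal_mul, ENNReal.toReal_ofReal (Real.exp_nonneg _), hE2'] at this
  -- Q Tm ≤ Q (Tm ∩ E)
  have hQTm : qm ≤ (Q (Tm ∩ E)).toReal := by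
    have h1 : Q Tm ≤ Q (Tm ∩ E) := by
      calc Q Tm ≤ Q ((Tm ∩ E) ∪ Eᶜ) := measure_mono (fun ω hω => by
            by_cases hE : ω ∈ E
            · exact Or.inl ⟨hω, hE⟩
            · exact Or.inr hE)
        _ ≤ Q (Tm ∩ E) + Q Eᶜ := measure_union_le _ _
        _ = Q (Tm ∩ E) := by rw [hEc, add_zero]
    exact ENNReal.toReal_mono (measure_ne_top _ _) h1
  -- DP on Tm ∩ E for Q
  have hq1 : (Q (Tm ∩ E)).toReal ≤ Real.exp ε * (P (Tm ∩ E)).toReal + δ :=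
    toReal_dp hδ0 (hQP _ (hTmm.inter hEm))
  -- qm (1 - B) ≤ δ
  have hqm_tail : qm * (1 - B) ≤ δ := by
    have h2 : qm ≤ Real.exp ε * (B * B * qm) + δ := by
      calc qm ≤ (Q (Tm ∩ E)).toReal := hQTm
        _ ≤ Real.exp ε * (P (Tm ∩ E)).toReal + δ := hq1
        _ ≤ Real.exp ε * (B * B * qm) + δ := by
            have := mul_le_mul_of_nonneg_left hstepB' (Real.exp_nonneg ε)
            linarith only [this]
    have h3 : Real.exp ε * (B * B * qm) = B * qm := by
      linear_combination (B * qm) * hAB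
    linarith only [h2, h3]
  -- pp (1 - B) ≤ δ
  have hpp_dp : pp ≤ Real.exp ε * qp + δ := toReal_dp hδ0 (hPQ _ hTpm)
  have hpp_tail : pp * (1 - B) ≤ δ := by
    -- qp ≤ B*B*pp
    have hqp_le : qp ≤ B * B * pp := by
      have h1 := mul_le_mul_of_nonneg_left hstepA (le_of_lt (mul_pos hB0 hB0))
      have h2 : B * B * (Real.exp (2 * ε) * qp) = qp := by
        rw [hE2]; linear_combination (B * Real.exp ε * qp + qp) * hAB
      linarith only [h1, h2]
    have h3 : pp ≤ B * pp + δ := by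
      have h4 : Real.exp ε * qp ≤ Real.exp ε * (B * B * pp) :=
        mul_le_mul_of_nonneg_left hqp_le (Real.exp_nonneg _)
      have h5 : Real.exp ε * (B * B * pp) = B * pp := by
        linear_combination (B * pp) * hAB
      linarith only [hpp_dp, h4, h5]
    linarith only [h3]
  -- pm ≤ B*B*qm + δ
  have hPEc : (P Eᶜ).toReal ≤ δ := by
    have := toReal_dp (Q := Q) hδ0 (hPQ Eᶜ hEm.compl)
    rw [hEc] at this
    simpa using this
  have hpm_le : pm ≤ B * B * qm + δ := by
    have h1 : P Tm ≤ P (Tm ∩ E) + P Eᶜ := by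
      calc P Tm ≤ P ((Tm ∩ E) ∪ Eᶜ) := measure_mono (fun ω hω => by
            by_cases hE : ω ∈ E
            · exact Or.inl ⟨hω, hE⟩
            · exact Or.inr hE)
        _ ≤ P (Tm ∩ E) + P Eᶜ := measure_union_le _ _
    have h2 := ENNReal.toReal_mono
      (ENNReal.add_ne_top.mpr ⟨measure_ne_top _ _, measure_ne_top _ _⟩) h1
    rw [ENNReal.toReal_add (measure_ne_top _ _) (measure_ne_top _ _)] at h2
    linarith only [h2, hstepB', hPEc]
  -- union bounds
  have hPunion : (P Sᶜ).toReal ≤ pm + pp := by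
    have h1 : P Sᶜ ≤ P Tm + P Tp :=
      le_trans (measure_mono hsub) (measure_union_le _ _)
    have h2 := ENNReal.toReal_mono
      (ENNReal.add_ne_top.mpr ⟨measure_ne_top _ _, measure_ne_top _ _⟩) h1
    rwa [ENNReal.toReal_add (measure_ne_top _ _) (measure_ne_top _ _)] at h2
  have hQunion : (Q Sᶜ).toReal ≤ qm + qp := by
    have h1 : Q Sᶜ ≤ Q Tm + Q Tp :=
      le_trans (measure_mono hsub) (measure_union_le _ _)
    have h2 := ENNReal.toReal_mono
      (ENNReal.add_ne_top.mpr ⟨measure_ne_top _ _, measure_ne_top _ _⟩) h1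
    rwa [ENNReal.toReal_add (measure_ne_top _ _) (measure_ne_top _ _)] at h2
  have h1B : 0 < 1 - B := by linarith
  constructor
  · rw [le_div_iff₀ h1B]
    have s1 : (P Sᶜ).toReal * (1 - B) ≤ (pm + pp) * (1 - B) :=
      mul_le_mul_of_nonneg_right hPunion h1B.le
    have s3 : pm * (1 - B) ≤ (B * B * qm + δ) * (1 - B) :=
      mul_le_mul_of_nonneg_right hpm_le h1B.le
    have s5 : B * B * (qm * (1 - B)) ≤ B * B * δ :=
      mul_le_mul_of_nonneg_left hqm_tail (by positivity)
    have s6 : B * B * δ ≤ B * δ :=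
      mul_le_mul_of_nonneg_right (mul_le_of_le_one_left hB0.le hB1.le) hδ0
    have s7 : B * δ ≤ 1 * δ := mul_le_mul_of_nonneg_right hB1.le hδ0
    linarith only [s1, s3, s5, s6, s7, hpp_tail]
  · rw [le_div_iff₀ h1B]
    have hqp_le : qp ≤ B * B * pp := by
      have h1 := mul_le_mul_of_nonneg_left hstepA (le_of_lt (mul_pos hB0 hB0))
      have h2 : B * B * (Real.exp (2 * ε) * qp) = qp := by
        rw [hE2]; linear_combination (B * Real.exp ε * qp + qp) * hAB
      linarith only [h1, h2]
    have s1 : (Q Sᶜ).toReal * (1 - B) ≤ (qm + qp) * (1 - B) :=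
      mul_le_mul_of_nonneg_right hQunion h1B.le
    have s3 : qp * (1 - B) ≤ (B * B * pp) * (1 - B) :=
      mul_le_mul_of_nonneg_right hqp_le h1B.le
    have s5 : B * B * (pp * (1 - B)) ≤ B * B * δ :=
      mul_le_mul_of_nonneg_left hpp_tail (by positivity)
    have s6 : B * B * δ ≤ B * δ :=
      mul_le_mul_of_nonneg_right (mul_le_of_le_one_left hB0.le hB1.le) hδ0
    have s7 : B * δ ≤ 1 * δ := mul_le_mul_of_nonneg_right hB1.le hδ0
    linarith only [s1, s3, s5, s6, s7, hqm_tail]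


/-- Moments of a shifted pushforward measure. -/
lemma map_moments {α : Type*} [MeasurableSpace α] (ν : Measure α) [IsProbabilityMeasure ν]
    {T : α → ℝ} (hT : Measurable T) (hT2 : MemLp T 2 ν) (b c : ℝ) :
    Integrable (fun ω : ℝ => ω) (Measure.map (fun w => b + T w) ν) ∧
    (∫ ω, ω ∂(Measure.map (fun w => b + T w) ν)) = b + ∫ w, T w ∂ν ∧
    Integrable (fun ω : ℝ => (ω - c) ^ 2) (Measure.map (fun w => b + T w) ν) ∧
    (∫ ω, (ω - c) ^ 2 ∂(Measure.map (fun w => b + T w) ν))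
      = (∫ w, (T w - ∫ w', T w' ∂ν) ^ 2 ∂ν) + (b + (∫ w, T w ∂ν) - c) ^ 2 := by
  set μT := ∫ w, T w ∂ν with hμT_def
  have hTint : Integrable T ν := hT2.integrable one_le_two
  have hmb : Measurable (fun w => b + T w) := measurable_const.add hT
  have hTsub : MemLp (fun w => T w - μT) 2 ν := hT2.sub (memLp_const μT)
  have hVint : Integrable (fun w => (T w - μT) ^ 2) ν :=
    (memLp_two_iff_integrable_sq hTsub.aestronglyMeasurable).mp hTsub
  have hmean0 : ∫ w, (T w - μT) ∂ν = 0 := by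
    rw [integral_sub hTint (integrable_const _), integral_const, probReal_univ]
    simp [hμT_def]
  have hsq : AEStronglyMeasurable (fun ω : ℝ => (ω - c) ^ 2)
      (Measure.map (fun w => b + T w) ν) :=
    ((measurable_id.sub_const c).pow_const 2).aestronglyMeasurable
  have hint2 : Integrable
      (fun w => (T w - μT) ^ 2 + ((2 * (b + μT - c)) * (T w - μT) + (b + μT - c) ^ 2)) ν :=
    hVint.add (((hTint.sub (integrable_const _)).const_mul _).add (integrable_const _))
  refine ⟨?_, ?_, ?_, ?_⟩
  · rw [integrable_map_measure measurable_id'.aestronglyMeasurable hmb.aemeasurable]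
    exact (integrable_const b).add hTint
  · have h1 : (∫ ω, ω ∂(Measure.map (fun w => b + T w) ν)) = ∫ w, (b + T w) ∂ν := by
      rw [integral_map hmb.aemeasurable measurable_id'.aestronglyMeasurable]
    rw [h1, integral_add (integrable_const b) hTint, integral_const, probReal_univ]
    simp [hμT_def]
  · refine (integrable_map_measure hsq hmb.aemeasurable).mpr ?_
    have he : (fun w => (T w - μT) ^ 2 + ((2 * (b + μT - c)) * (T w - μT) + (b + μT - c) ^ 2))
        = ((fun ω : ℝ => (ω - c) ^ 2) ∘ fun w => b + T w) := by
      funext w; simp only [Function.comp_apply]; ring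
    rw [← he]
    exact hint2
  · have h1 : (∫ ω, (ω - c) ^ 2 ∂(Measure.map (fun w => b + T w) ν))
        = ∫ w, (b + T w - c) ^ 2 ∂ν := by
      rw [integral_map hmb.aemeasurable hsq]
    have h2 : ∫ w, (b + T w - c) ^ 2 ∂ν = ∫ w,
        ((T w - μT) ^ 2 + ((2 * (b + μT - c)) * (T w - μT) + (b + μT - c) ^ 2)) ∂ν :=
      integral_congr_ae (Filter.Eventually.of_forall fun w => by ring)
    have hintB : Integrable (fun w => (2 * (b + μT - c)) * (T w - μT)) ν :=
      (hTint.sub (integrable_const _)).const_mul _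
    have hintA : Integrable
        (fun w => (2 * (b + μT - c)) * (T w - μT) + (b + μT - c) ^ 2) ν :=
      hintB.add (integrable_const _)
    rw [h1, h2, integral_add hVint hintA, integral_add hintB (integrable_const _),
      integral_const_mul, hmean0, integral_const, probReal_univ]
    simp


set_option maxHeartbeats 1000000 in
/-- Core lemma: the mean of P-hat is far from the mean of Q. -/
lemma core (P Q : Measure ℝ) [IsProbabilityMeasure P] [IsProbabilityMeasure Q]
    {S : Set ℝ} (hS : MeasurableSet S)
    {d : ℝ} (hd0 : 0 ≤ d) (hd16 : d ≤ 1 / 16)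
    (hPS : (P Sᶜ).toReal ≤ d) (hQS : (Q Sᶜ).toReal ≤ d)
    {c' Δ V whalf : ℝ} (hV : 0 ≤ V)
    (hPint : Integrable (fun ω : ℝ => ω) P) (hQint : Integrable (fun ω : ℝ => ω) Q)
    (hP2 : Integrable (fun ω : ℝ => (ω - c') ^ 2) P)
    (hQ2 : Integrable (fun ω : ℝ => (ω - c') ^ 2) Q)
    (hPm : ∫ ω, ω ∂P = c' + Δ) (hQm : ∫ ω, ω ∂Q = c')
    (hP2v : ∫ ω, (ω - c') ^ 2 ∂P ≤ V + Δ ^ 2) (hQ2v : ∫ ω, (ω - c') ^ 2 ∂Q ≤ V)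
    (hw : whalf ≤ |Δ|) :
    |(∫ ω, ω ∂((Q S / P S) • P.restrict S + Q.restrict Sᶜ)) - ∫ ω, ω ∂Q|
      ≥ (1 / 2 - 2 * d) * whalf - 17 / 8 * Real.sqrt (d * V) := by
  have hgP : Integrable (fun ω : ℝ => ω - c') P := hPint.sub (integrable_const c')
  have hgQ : Integrable (fun ω : ℝ => ω - c') Q := hQint.sub (integrable_const c')
  -- masses
  have hcomplP : (P S).toReal + (P Sᶜ).toReal = 1 := by
    rw [← ENNReal.toReal_add (measure_ne_top _ _) (measure_ne_top _ _),
      measure_add_measure_compl hS, measure_univ, ENNReal.toReal_one]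
  have hcomplQ : (Q S).toReal + (Q Sᶜ).toReal = 1 := by
    rw [← ENNReal.toReal_add (measure_ne_top _ _) (measure_ne_top _ _),
      measure_add_measure_compl hS, measure_univ, ENNReal.toReal_one]
  set pS := (P S).toReal with hpS_def
  set qS := (Q S).toReal with hqS_def
  have hpS1 : 1 - d ≤ pS := by linarith only [hcomplP, hPS]
  have hqS1 : 1 - d ≤ qS := by linarith only [hcomplQ, hQS]
  have hpSpos : 0 < pS := by linarith only [hpS1, hd16]
  have hpSle1 : pS ≤ 1 := by
    linarith only [hcomplP, ENNReal.toReal_nonneg (a := P Sᶜ)]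
  have hqSle1 : qS ≤ 1 := by
    linarith only [hcomplQ, ENNReal.toReal_nonneg (a := Q Sᶜ)]
  have hPSne0 : P S ≠ 0 := by
    intro h
    rw [hpS_def, h] at hpSpos
    simp at hpSpos
  have hPSneT : P S ≠ ⊤ := measure_ne_top _ _
  have hrneT : Q S / P S ≠ ⊤ := (ENNReal.div_lt_top (measure_ne_top _ _) hPSne0).ne
  set r := (Q S / P S).toReal with hr_def
  have hr_eq : r * pS = qS := by
    rw [hr_def, hpS_def, ← ENNReal.toReal_mul, ENNReal.div_mul_cancel hPSne0 hPSneT]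
  have hr0 : 0 ≤ r := ENNReal.toReal_nonneg
  have hr_lb : 1 - d ≤ r := by
    have h1 : r * pS ≤ r * 1 := mul_le_mul_of_nonneg_left hpSle1 hr0
    linarith only [h1, hr_eq, hqS1]
  have hr_ub : r ≤ 1 / (1 - d) := by
    rw [hr_def, ENNReal.toReal_div, ← hpS_def, ← hqS_def]
    exact div_le_div₀ (by norm_num) hqSle1 (by linarith) hpS1
  -- the Phat integral
  have hint1 : Integrable (fun ω : ℝ => ω) ((Q S / P S) • P.restrict S) :=
    (hPint.restrict).smul_measure hrneT
  have hint2 : Integrable (fun ω : ℝ => ω) (Q.restrict Sᶜ) := hQint.restrict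
  have hPhat : (∫ ω, ω ∂((Q S / P S) • P.restrict S + Q.restrict Sᶜ))
      = r * ∫ ω in S, ω ∂P + ∫ ω in Sᶜ, ω ∂Q := by
    rw [integral_add_measure hint1 hint2, integral_smul_measure, smul_eq_mul, hr_def]
  -- decompose set integrals
  set e1 := ∫ ω in Sᶜ, (ω - c') ∂P with he1_def
  set e2 := ∫ ω in Sᶜ, (ω - c') ∂Q with he2_def
  have hsplitP : ∫ ω in S, (ω - c') ∂P = Δ - e1 := by
    have h := integral_add_compl hS hgP
    have h2 : ∫ ω, (ω - c') ∂P = Δ := by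
      rw [integral_sub hPint (integrable_const _), integral_const, hPm]
      simp [measure_univ]
    rw [h2] at h
    linarith only [h]
  have hsplitQ : ∫ ω in S, (ω - c') ∂Q = -e2 := by
    have h := integral_add_compl hS hgQ
    have h2 : ∫ ω, (ω - c') ∂Q = 0 := by
      rw [integral_sub hQint (integrable_const _), integral_const, hQm]
      simp [measure_univ]
    rw [h2] at h
    linarith only [h]
  have hSP : ∫ ω in S, ω ∂P = (Δ - e1) + c' * pS := by
    have h : ∀ ω : ℝ, ω = (ω - c') + c' := fun ω => by ring
    calc ∫ ω in S, ω ∂P = ∫ ω in S, ((ω - c') + c') ∂P := by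
          congr 1; funext ω; rw [← h ω]
      _ = (∫ ω in S, (ω - c') ∂P) + ∫ ω in S, (c' : ℝ) ∂P :=
          integral_add hgP.restrict (integrable_const _)
      _ = (Δ - e1) + c' * pS := by
          rw [hsplitP, setIntegral_const, smul_eq_mul, measureReal_def]; ring
  have hScQ : ∫ ω in Sᶜ, ω ∂Q = e2 + c' * (Q Sᶜ).toReal := by
    have h : ∀ ω : ℝ, ω = (ω - c') + c' := fun ω => by ring
    calc ∫ ω in Sᶜ, ω ∂Q = ∫ ω in Sᶜ, ((ω - c') + c') ∂Q := by
          congr 1; funext ω; rw [← h ω]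
      _ = (∫ ω in Sᶜ, (ω - c') ∂Q) + ∫ ω in Sᶜ, (c' : ℝ) ∂Q :=
          integral_add hgQ.restrict (integrable_const _)
      _ = e2 + c' * (Q Sᶜ).toReal := by
          rw [setIntegral_const, smul_eq_mul, ← he2_def, measureReal_def]; ring
  -- the difference
  have hD : (∫ ω, ω ∂((Q S / P S) • P.restrict S + Q.restrict Sᶜ)) - ∫ ω, ω ∂Q
      = r * Δ - r * e1 + e2 := by
    rw [hPhat, hSP, hScQ, hQm]
    have hq1 : qS + (Q Sᶜ).toReal = 1 := hcomplQ
    linear_combination c' * hr_eq + c' * hq1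
  -- error bounds
  have hP2nn : 0 ≤ ∫ ω, (ω - c') ^ 2 ∂P := integral_nonneg fun ω => sq_nonneg _
  have hQ2nn : 0 ≤ ∫ ω, (ω - c') ^ 2 ∂Q := integral_nonneg fun ω => sq_nonneg _
  have he1 : |e1| ≤ Real.sqrt (d * (V + Δ ^ 2)) := by
    apply Real.abs_le_sqrt
    calc e1 ^ 2 ≤ (P Sᶜ).toReal * ∫ ω, (ω - c') ^ 2 ∂P :=
          sq_setIntegral_le hgP hP2 Sᶜ
      _ ≤ d * (V + Δ ^ 2) := by
          apply mul_le_mul hPS hP2v hP2nn hd0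
  have he2 : |e2| ≤ Real.sqrt (d * V) := by
    apply Real.abs_le_sqrt
    calc e2 ^ 2 ≤ (Q Sᶜ).toReal * ∫ ω, (ω - c') ^ 2 ∂Q :=
          sq_setIntegral_le hgQ hQ2 Sᶜ
      _ ≤ d * V := mul_le_mul hQS hQ2v hQ2nn hd0
  -- split the sqrt
  set t := Real.sqrt (d * V) with ht_def
  set s := Real.sqrt d with hs_def
  have ht0 : 0 ≤ t := Real.sqrt_nonneg _
  have hs0 : 0 ≤ s := Real.sqrt_nonneg _
  have hssq : s ^ 2 = d := Real.sq_sqrt hd0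
  have htsq : t ^ 2 = d * V := Real.sq_sqrt (mul_nonneg hd0 hV)
  have hs14 : s ≤ 1 / 4 := by
    rw [hs_def, show (1 : ℝ) / 4 = Real.sqrt ((1 : ℝ) / 16) by
      rw [show (1 : ℝ) / 16 = (1 / 4) ^ 2 by norm_num, Real.sqrt_sq (by norm_num)]]
    exact Real.sqrt_le_sqrt hd16
  have hsqrt_split : Real.sqrt (d * (V + Δ ^ 2)) ≤ t + s * |Δ| := by
    have h1 : d * (V + Δ ^ 2) ≤ (t + s * |Δ|) ^ 2 := by
      have h3 : s ^ 2 * |Δ| ^ 2 = d * Δ ^ 2 := by rw [hssq, sq_abs]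
      have h4 : 0 ≤ t * (s * |Δ|) := by positivity
      linarith only [htsq, h3, h4]
    calc Real.sqrt (d * (V + Δ ^ 2)) ≤ Real.sqrt ((t + s * |Δ|) ^ 2) :=
          Real.sqrt_le_sqrt h1
      _ = t + s * |Δ| := Real.sqrt_sq (by positivity)
  have he1' : |e1| ≤ t + s * |Δ| := he1.trans hsqrt_split
  -- lower bound on |D|
  have habs : r * |Δ| - (r * |e1| + |e2|) ≤
      |(∫ ω, ω ∂((Q S / P S) • P.restrict S + Q.restrict Sᶜ)) - ∫ ω, ω ∂Q| := by
    have h1 := abs_sub_abs_le_abs_sub (r * Δ) (r * e1 - e2)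
    have h2 : r * Δ - (r * e1 - e2) = r * Δ - r * e1 + e2 := by ring
    rw [h2, ← hD] at h1
    have h3 : |r * e1 - e2| ≤ r * |e1| + |e2| := by
      calc |r * e1 - e2| ≤ |r * e1| + |e2| := abs_sub _ _
        _ = r * |e1| + |e2| := by rw [abs_mul, abs_of_nonneg hr0]
    rw [abs_mul, abs_of_nonneg hr0] at h1
    linarith only [h1, h3]
  -- final numeric computation
  set u := 1 / (1 - d) with hu_def
  have hu_pos : 0 < u := by
    rw [hu_def]
    exact div_pos one_pos (by linarith only [hd16])
  have hu16 : u ≤ 16 / 15 := by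
    rw [hu_def, div_le_div_iff₀ (by linarith only [hd16]) (by norm_num)]
    linarith only [hd16]
  have hre1 : r * |e1| ≤ u * (t + s * |Δ|) := by
    apply mul_le_mul hr_ub he1' (abs_nonneg _) hu_pos.le
  have hrΔ : (1 - d) * |Δ| ≤ r * |Δ| := mul_le_mul_of_nonneg_right hr_lb (abs_nonneg _)
  have hfinal : (1 / 2 - 2 * d) * whalf - 17 / 8 * t ≤
      (1 - d) * |Δ| - u * (t + s * |Δ|) - t := by
    have hΔ0 : 0 ≤ |Δ| := abs_nonneg Δ
    have hus : u * s ≤ 16 / 15 * (1 / 4) :=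
      mul_le_mul hu16 hs14 hs0 (by norm_num)
    have hcoef : 1 / 2 - 2 * d ≤ (1 - d) - u * s := by linarith only [hus, hd0]
    have hwd : (1 / 2 - 2 * d) * whalf ≤ (1 / 2 - 2 * d) * |Δ| :=
      mul_le_mul_of_nonneg_left hw (by linarith)
    have hcoefmul : (1 / 2 - 2 * d) * |Δ| ≤ ((1 - d) - u * s) * |Δ| :=
      mul_le_mul_of_nonneg_right hcoef hΔ0
    have hut : u * t ≤ 16 / 15 * t := mul_le_mul_of_nonneg_right hu16 ht0
    linarith only [hwd, hcoefmul, hut, ht0]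
  linarith only [habs, hre1, hrΔ, he2, hfinal]


end DPAux

open DPPaper

/-- the key lemma on the shifted distribution P̂. -/
theorem hatP_mean_separation (m n : ℕ) (p ε δ : ℝ) (hp : 2 ≤ p) (hε : 0 < ε) (hδ0 : 0 ≤ δ)
    (A : Matrix (Fin m) (Fin n) ℝ)
    (ν : Measure (Fin m → ℝ)) (hν : IsProbabilityMeasure ν)
    (hmom : ∀ i, Integrable (fun w => (w i) ^ 2) ν)
    (hDP : IsDP (fun x => Measure.map (fun w => A.mulVec x + w) ν) ε δ)
    (hbias : Real.sqrt (∑ i, (∫ w, w i ∂ν) ^ 2)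
        ≤ gammaP p A / ε * (n : ℝ) ^ ((p - 2) / (2 * p)))
    (hδ' : 2 * δ / (1 - Real.exp (-ε)) ≤
      min (1 / 16) (min (ε * kappa A * (n : ℝ) ^ ((p - 2) / (2 * p)) / (12 * gammaP p A))
        (1 - Real.exp (-ε))))
    (θ : Fin m → ℝ) :
    ∀ x : Fin n → ℝ, ∃ x' : Fin n → ℝ, Neighboring x x' ∧
      (let P : Measure ℝ :=
        Measure.map (fun w => (∑ i, θ i * A.mulVec x i) + ∑ i, θ i * w i) ν
       let Q : Measure ℝ :=
        Measure.map (fun w => (∑ i, θ i * A.mulVec x' i) + ∑ i, θ i * w i) ν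
       let S : Set ℝ := {ω | ENNReal.ofReal (Real.exp (-(2 * ε))) ≤ P.rnDeriv Q ω ∧
                            P.rnDeriv Q ω ≤ ENNReal.ofReal (Real.exp (2 * ε))}
       let Phat : Measure ℝ := (Q S / P S) • P.restrict S + Q.restrict Sᶜ
       |(∫ ω, ω ∂Phat) - ∫ ω, ω ∂Q| ≥
         (1 / 2 - 2 * (2 * δ / (1 - Real.exp (-ε)))) * width (sensPolytope A) θ / 2
           - (17 / 8) * Real.sqrt ((2 * δ / (1 - Real.exp (-ε))) *
               (∫ w, ((∑ i, θ i * w i) - ∫ w', ∑ i, θ i * w' i ∂ν) ^ 2 ∂ν))) := by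
  intro x
  classical
  -- the linear functional
  have hTmeas : Measurable (fun w : Fin m → ℝ => ∑ i, θ i * w i) :=
    Finset.measurable_sum (f := fun i (w : Fin m → ℝ) => θ i * w i) _ fun i _ => by fun_prop
  -- Step 1 : choose a neighboring x' with large mean shift
  obtain ⟨x', hne, hΔw⟩ : ∃ x' : Fin n → ℝ, Neighboring x x' ∧
      width (sensPolytope A) θ / 2 ≤
        |(∑ i, θ i * A.mulVec x i) - ∑ i, θ i * A.mulVec x' i| := by
    rcases Nat.eq_zero_or_pos n with hn | hn
    · subst hn
      refine ⟨x, by simp [Neighboring], ?_⟩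
      have hpoly : sensPolytope A = {0} := by
        ext v
        constructor
        · rintro ⟨u, -, rfl⟩
          have : A.mulVec u = 0 := by
            funext i
            simp [Matrix.mulVec, dotProduct]
          simp [this]
        · rintro hv
          refine ⟨0, by simp, ?_⟩
          simp only [Set.mem_singleton_iff] at hv
          rw [hv, Matrix.mulVec_zero]
      have him : (fun v : Fin m → ℝ => ∑ i, θ i * v i) '' sensPolytope A = {0} := by
        rw [hpoly, Set.image_singleton]
        simp
      unfold width
      rw [him, csSup_singleton, csInf_singleton]
      simp
    · have hnE : Nonempty (Fin n) := ⟨⟨0, hn⟩⟩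
      set c : Fin n → ℝ := fun j => ∑ i, θ i * A i j with hc_def
      obtain ⟨j0, -, hj0⟩ :=
        Finset.exists_max_image Finset.univ (fun j => |c j|) Finset.univ_nonempty
      have hgmul : ∀ u : Fin n → ℝ, (∑ i, θ i * A.mulVec u i) = ∑ j, c j * u j := by
        intro u
        simp only [Matrix.mulVec, dotProduct, hc_def]
        calc ∑ i, θ i * ∑ j, A i j * u j
            = ∑ i, ∑ j, θ i * (A i j * u j) := by
              exact Finset.sum_congr rfl fun i _ => Finset.mul_sum _ _ _
          _ = ∑ j, ∑ i, θ i * (A i j * u j) := Finset.sum_comm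
          _ = ∑ j, (∑ i, θ i * A i j) * u j := by
              refine Finset.sum_congr rfl fun j _ => ?_
              rw [Finset.sum_mul]
              exact Finset.sum_congr rfl fun i _ => by ring
      have hbound : ∀ u : Fin n → ℝ, (∑ j, |u j|) ≤ 1 → |∑ j, c j * u j| ≤ |c j0| := by
        intro u hu
        have habs0 : (0 : ℝ) ≤ |c j0| := abs_nonneg _
        calc |∑ j, c j * u j| ≤ ∑ j, |c j * u j| := Finset.abs_sum_le_sum_abs _ _
          _ ≤ ∑ j, |c j0| * |u j| := Finset.sum_le_sum fun j _ => by
              rw [abs_mul]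
              exact mul_le_mul_of_nonneg_right (hj0 j (Finset.mem_univ j)) (abs_nonneg _)
          _ = |c j0| * ∑ j, |u j| := (Finset.mul_sum _ _ _).symm
          _ ≤ |c j0| * 1 := mul_le_mul_of_nonneg_left hu habs0
          _ = |c j0| := mul_one _
      have hwb : width (sensPolytope A) θ ≤ 2 * |c j0| := by
        unfold width
        have hmemz : ((0 : Fin m → ℝ)) ∈ sensPolytope A :=
          ⟨0, by simp, by rw [Matrix.mulVec_zero]⟩
        have hneIm : ((fun v : Fin m → ℝ => ∑ i, θ i * v i) '' sensPolytope A).Nonempty :=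
          ⟨∑ i, θ i * (0 : Fin m → ℝ) i, ⟨0, hmemz, rfl⟩⟩
        have hkey : ∀ y ∈ (fun v : Fin m → ℝ => ∑ i, θ i * v i) '' sensPolytope A,
            |y| ≤ |c j0| := by
          rintro y ⟨v, ⟨u, hu, rfl⟩, rfl⟩
          have h2 : |∑ i, θ i * A.mulVec u i| ≤ |c j0| := by
            rw [hgmul u]; exact hbound u hu
          exact h2
        have h1 : sSup ((fun v : Fin m → ℝ => ∑ i, θ i * v i) '' sensPolytope A) ≤ |c j0| :=
          csSup_le hneIm fun y hy => (le_abs_self y).trans (hkey y hy)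
        have h2 : -|c j0| ≤ sInf ((fun v : Fin m → ℝ => ∑ i, θ i * v i) '' sensPolytope A) :=
          le_csInf hneIm fun y hy => by
            have := hkey y hy
            linarith only [this, neg_abs_le y]
        linarith only [h1, h2]
      set sgn : ℝ := if 0 ≤ c j0 then 1 else -1 with hsgn_def
      have hsgnabs : |sgn| = 1 := by
        rw [hsgn_def]; split_ifs <;> norm_num
      refine ⟨fun j => if j = j0 then x j - sgn else x j, ?_, ?_⟩
      · unfold Neighboring
        have hterm : ∀ j : Fin n,
            |x j - (if j = j0 then x j - sgn else x j)| = if j = j0 then |sgn| else 0 := by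
          intro j
          split_ifs with h
          · congr 1; ring
          · simp
        calc (∑ j, |x j - (if j = j0 then x j - sgn else x j)|)
            = ∑ j, (if j = j0 then |sgn| else 0) := Finset.sum_congr rfl fun j _ => hterm j
          _ = |sgn| := by rw [Finset.sum_ite_eq' Finset.univ j0 fun _ => |sgn|]; simp
          _ ≤ 1 := by rw [hsgnabs]
      · have hAd : (∑ i, θ i * A.mulVec x i)
            - (∑ i, θ i * A.mulVec (fun j => if j = j0 then x j - sgn else x j) i)
            = c j0 * sgn := by
          rw [hgmul x, hgmul (fun j => if j = j0 then x j - sgn else x j)]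
          rw [← Finset.sum_sub_distrib]
          have hterm : ∀ j : Fin n,
              c j * x j - c j * (if j = j0 then x j - sgn else x j)
                = if j = j0 then c j0 * sgn else 0 := by
            intro j
            split_ifs with h
            · subst h; ring
            · ring
          calc (∑ j, (c j * x j - c j * (if j = j0 then x j - sgn else x j)))
              = ∑ j, (if j = j0 then c j0 * sgn else 0) :=
                Finset.sum_congr rfl fun j _ => hterm j
            _ = c j0 * sgn := by
                rw [Finset.sum_ite_eq' Finset.univ j0 fun _ => c j0 * sgn]; simp
        rw [hAd, abs_mul, hsgnabs, mul_one]
        linarith only [hwb]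
  refine ⟨x', hne, ?_⟩
  have hne' : Neighboring x' x := by
    unfold Neighboring at hne ⊢
    calc (∑ i, |x' i - x i|) = ∑ i, |x i - x' i| :=
        Finset.sum_congr rfl fun i _ => abs_sub_comm _ _
      _ ≤ 1 := hne
  -- notation
  set T : (Fin m → ℝ) → ℝ := fun w => ∑ i, θ i * w i with hT_def
  set a : ℝ := ∑ i, θ i * A.mulVec x i with ha_def
  set a' : ℝ := ∑ i, θ i * A.mulVec x' i with ha'_def
  set μT : ℝ := ∫ w, T w ∂ν with hμT_def
  set V : ℝ := ∫ w, (T w - μT) ^ 2 ∂ν with hV_def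
  have hT2 : MemLp T 2 ν := by
    have h := memLp_finset_sum (μ := ν) (p := 2) Finset.univ
      (f := fun (i : Fin m) (w : Fin m → ℝ) => θ i * w i) (fun i _ =>
        ((memLp_two_iff_integrable_sq
          (measurable_pi_apply i).aestronglyMeasurable).mpr (hmom i)).const_mul (θ i))
    exact h
  have hV0 : 0 ≤ V := integral_nonneg fun w => sq_nonneg _
  set P : Measure ℝ := Measure.map (fun w => a + T w) ν with hP_def
  set Q : Measure ℝ := Measure.map (fun w => a' + T w) ν with hQ_def
  have hmP : Measurable (fun w : Fin m → ℝ => a + T w) := measurable_const.add hTmeas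
  have hmQ : Measurable (fun w : Fin m → ℝ => a' + T w) := measurable_const.add hTmeas
  haveI hPprob : IsProbabilityMeasure P := Measure.isProbabilityMeasure_map hmP.aemeasurable
  haveI hQprob : IsProbabilityMeasure Q := Measure.isProbabilityMeasure_map hmQ.aemeasurable
  -- DP transfer
  have hmap_eq : ∀ y : Fin n → ℝ,
      Measure.map (fun w => (∑ i, θ i * A.mulVec y i) + T w) ν
        = Measure.map T (Measure.map (fun w => A.mulVec y + w) ν) := by
    intro y
    have hadd : Measurable (fun w : Fin m → ℝ => A.mulVec y + w) :=
      measurable_const.add measurable_id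
    rw [Measure.map_map hTmeas hadd]
    congr 1
    funext w
    simp only [Function.comp_apply, hT_def, Pi.add_apply]
    rw [← Finset.sum_add_distrib]
    exact Finset.sum_congr rfl fun i _ => by ring
  have hDPpair : ∀ (y y' : Fin n → ℝ), Neighboring y y' → ∀ U : Set ℝ, MeasurableSet U →
      Measure.map (fun w => (∑ i, θ i * A.mulVec y i) + T w) ν U
        ≤ ENNReal.ofReal (Real.exp ε)
            * Measure.map (fun w => (∑ i, θ i * A.mulVec y' i) + T w) ν U
          + ENNReal.ofReal δ := by
    intro y y' hyy U hU
    rw [hmap_eq y, hmap_eq y', Measure.map_apply hTmeas hU, Measure.map_apply hTmeas hU]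
    exact hDP y y' hyy _ (hTmeas hU)
  have hPQ : ∀ U : Set ℝ, MeasurableSet U →
      P U ≤ ENNReal.ofReal (Real.exp ε) * Q U + ENNReal.ofReal δ := by
    intro U hU
    exact hDPpair x x' hne U hU
  have hQP : ∀ U : Set ℝ, MeasurableSet U →
      Q U ≤ ENNReal.ofReal (Real.exp ε) * P U + ENNReal.ofReal δ := by
    intro U hU
    exact hDPpair x' x hne' U hU
  -- the set S
  have hS : MeasurableSet {ω : ℝ | ENNReal.ofReal (Real.exp (-(2 * ε))) ≤ P.rnDeriv Q ω ∧
      P.rnDeriv Q ω ≤ ENNReal.ofReal (Real.exp (2 * ε))} :=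
    (Measure.measurable_rnDeriv P Q) measurableSet_Icc
  obtain ⟨hPS, hQS⟩ := DPAux.tail_bound P Q hε hδ0 hPQ hQP
  -- the constant d
  set d : ℝ := 2 * δ / (1 - Real.exp (-ε)) with hd_def
  have hd16 : d ≤ 1 / 16 := le_trans hδ' (min_le_left _ _)
  have hexp1 : Real.exp (-ε) < 1 := Real.exp_lt_one_iff.mpr (by linarith)
  have hd0 : 0 ≤ d := div_nonneg (by linarith only [hδ0]) (by linarith only [hexp1])
  -- moments
  have hfP := DPAux.map_moments ν hTmeas hT2 a (a' + μT)
  have hfQ := DPAux.map_moments ν hTmeas hT2 a' (a' + μT)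
  have hPm : ∫ ω, ω ∂P = (a' + μT) + (a - a') := by
    rw [hP_def, hfP.2.1]; ring
  have hQm : ∫ ω, ω ∂Q = a' + μT := by
    rw [hQ_def, hfQ.2.1]
  have hP2v : ∫ ω, (ω - (a' + μT)) ^ 2 ∂P ≤ V + (a - a') ^ 2 := by
    rw [hP_def, hfP.2.2.2]
    apply le_of_eq
    ring
  have hQ2v : ∫ ω, (ω - (a' + μT)) ^ 2 ∂Q ≤ V := by
    rw [hQ_def, hfQ.2.2.2]
    apply le_of_eq
    ring
  have hkey := DPAux.core P Q hS hd0 hd16 hPS hQS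
    (c' := a' + μT) (Δ := a - a') (V := V) (whalf := width (sensPolytope A) θ / 2)
    hV0 hfP.1 hfQ.1 hfP.2.2.1 hfQ.2.2.1 hPm hQm hP2v hQ2v hΔw
  have hfinal : (1 / 2 - 2 * d) * width (sensPolytope A) θ / 2
        - 17 / 8 * Real.sqrt (d * V)
      ≤ |(∫ ω, ω ∂((Q {ω | ENNReal.ofReal (Real.exp (-(2 * ε))) ≤ P.rnDeriv Q ω ∧
            P.rnDeriv Q ω ≤ ENNReal.ofReal (Real.exp (2 * ε))}
          / P {ω | ENNReal.ofReal (Real.exp (-(2 * ε))) ≤ P.rnDeriv Q ω ∧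
            P.rnDeriv Q ω ≤ ENNReal.ofReal (Real.exp (2 * ε))})
          • P.restrict {ω | ENNReal.ofReal (Real.exp (-(2 * ε))) ≤ P.rnDeriv Q ω ∧
            P.rnDeriv Q ω ≤ ENNReal.ofReal (Real.exp (2 * ε))}
          + Q.restrict {ω | ENNReal.ofReal (Real.exp (-(2 * ε))) ≤ P.rnDeriv Q ω ∧
            P.rnDeriv Q ω ≤ ENNReal.ofReal (Real.exp (2 * ε))}ᶜ))
        - ∫ ω, ω ∂Q| := by
    have heq : (1 / 2 - 2 * d) * width (sensPolytope A) θ / 2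
        = (1 / 2 - 2 * d) * (width (sensPolytope A) θ / 2) := by ring
    rw [heq]
    exact hkey
  exact hfinal
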